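/- Let G be a finite group and k a commutative ring. The map ρ: xB_k(G) → Z(kG) sending a basis element (H, a) to Σ_{[x] ∈ G/H} x a x⁻¹ (sum over left coset representatives) is a well-defined surjective homomorphism of k-algebras onto the center of the group algebra kG. -/

import Mathlib

namespace CrossedBurnside

variable {G : Type} [Group G]

/-- Pairs `(H, a)` with `H ≤ G` and `a ∈ C_G(H)`. -/
def CPair (G : Type) [Group G] : Type :=
  {p : Subgroup G × G // p.2 ∈ Subgroup.centralizer (p.1 : Set G)}

/-- Simultaneous conjugation relation on pairs: `(H,a) ~ (xHx⁻¹, xax⁻¹)`. -/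
def conjRel (p q : CPair G) : Prop :=
  ∃ x : G, Subgroup.map (MulAut.conj x).toMonoidHom p.1.1 = q.1.1 ∧
    x * p.1.2 * x⁻¹ = q.1.2

/-- The underlying `k`-module of the crossed Burnside algebra: the free `k`-module
on `G`-conjugacy classes of pairs `(H, a)` with `a ∈ C_G(H)`. -/
abbrev XB (k G : Type) [CommRing k] [Group G] : Type :=
  Quot (conjRel (G := G)) →₀ k

theorem centralizer_aux {K H : Subgroup G} {b a g : G}
    (hb : b ∈ Subgroup.centralizer (K : Set G))
    (ha : a ∈ Subgroup.centralizer (H : Set G)) :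
    b * (g * a * g⁻¹) ∈
      Subgroup.centralizer
        ((K ⊓ Subgroup.map (MulAut.conj g).toMonoidHom H : Subgroup G) : Set G) := by
  intro u hu
  obtain ⟨huK, huH⟩ := hu
  obtain ⟨h, hh, he⟩ := huH
  have h1 : u * b = b * u := hb u huK
  have h2 : h * a = a * h := ha h hh
  have hu' : u = g * h * g⁻¹ := by simpa [MulAut.conj] using he.symm
  have h3 : u * (g * a * g⁻¹) = (g * a * g⁻¹) * u := by
    rw [hu']
    calc g * h * g⁻¹ * (g * a * g⁻¹) = g * (h * a) * g⁻¹ := by group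
    _ = g * (a * h) * g⁻¹ := by rw [h2]
    _ = g * a * g⁻¹ * (g * h * g⁻¹) := by group
  rw [← mul_assoc, h1, mul_assoc, h3, ← mul_assoc]

theorem one_mem_centralizer_top :
    (1 : G) ∈ Subgroup.centralizer ((⊤ : Subgroup G) : Set G) := by
  intro u _; simp


variable {k : Type} [CommRing k]

/-- The basis element of `XB k G` given by a pair `(H, a)` with `a ∈ C_G(H)`. -/
noncomputable def basisElt (k : Type) [CommRing k] (H : Subgroup G) (a : G)
    (ha : a ∈ Subgroup.centralizer (H : Set G)) : XB k G :=
  Finsupp.single (Quot.mk (conjRel (G := G)) ⟨(H, a), ha⟩) 1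

/-- `mul` realizes the crossed Burnside multiplication: for all pairs `(K, b)`,
`(H, a)` and every set `R` of representatives of the double cosets `K\G/H`,
`(K, b) · (H, a) = Σ_{g ∈ R} (K ∩ gHg⁻¹, b·gag⁻¹)`. -/
def IsXBMul (mul : XB k G →ₗ[k] XB k G →ₗ[k] XB k G) : Prop :=
  ∀ (K H : Subgroup G) (b a : G)
    (hb : b ∈ Subgroup.centralizer (K : Set G))
    (ha : a ∈ Subgroup.centralizer (H : Set G))
    (R : Finset G),
    (∀ x : G, ∃! r, r ∈ R ∧ x ∈ DoubleCoset.doubleCoset r (K : Set G) (H : Set G)) →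
    mul (basisElt k K b hb) (basisElt k H a ha) =
      ∑ g ∈ R,
        basisElt k (K ⊓ Subgroup.map (MulAut.conj g).toMonoidHom H)
          (b * (g * a * g⁻¹)) (centralizer_aux hb ha)


/-! ### Auxiliary development for statement 8 -/

open scoped Classical

section Rho

set_option linter.unusedSectionVars false

variable (k : Type) [CommRing k] [Fintype G]

/-- The well-defined function on cosets `xH ↦ single (x a x⁻¹) 1`. -/
noncomputable def rfun (H : Subgroup G) (a : G)
    (ha : a ∈ Subgroup.centralizer (H : Set G)) : G ⧸ H → MonoidAlgebra k G :=
  Quotient.lift (fun x => MonoidAlgebra.single (x * a * x⁻¹) (1 : k)) (by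
    intro x y hxy
    have hm : x⁻¹ * y ∈ H := QuotientGroup.leftRel_apply.mp hxy
    have hc := ha _ hm
    have hxy' : x * a * x⁻¹ = y * a * y⁻¹ := by
      calc x * a * x⁻¹ = x * (a * (x⁻¹ * y)) * y⁻¹ := by group
      _ = x * ((x⁻¹ * y) * a) * y⁻¹ := by rw [← hc]
      _ = y * a * y⁻¹ := by group
    simp [hxy'])

@[simp] theorem rfun_mk (H : Subgroup G) (a : G)
    (ha : a ∈ Subgroup.centralizer (H : Set G)) (x : G) :
    rfun k H a ha ((x : G ⧸ H)) = MonoidAlgebra.single (x * a * x⁻¹) (1 : k) := rfl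

/-- The value of `ρ` on a conjugacy class of pairs. -/
noncomputable def rho0 (p : CPair G) : MonoidAlgebra k G :=
  ∑ q : G ⧸ p.1.1, rfun k p.1.1 p.1.2 p.2 q

theorem mem_conj_iff (g : G) (H : Subgroup G) (z : G) :
    z ∈ Subgroup.map (MulAut.conj g).toMonoidHom H ↔ g⁻¹ * z * g ∈ H := by
  simp only [Subgroup.mem_map, MulEquiv.coe_toMonoidHom, MulAut.conj_apply]
  constructor
  · rintro ⟨h, hh, rfl⟩
    have h' : g⁻¹ * (g * h * g⁻¹) * g = h := by group
    rwa [h']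
  · intro hz
    exact ⟨g⁻¹ * z * g, hz, by group⟩

theorem rho0_conj (p q : CPair G) (h : conjRel p q) : rho0 k p = rho0 k q := by
  obtain ⟨⟨H, a⟩, ha⟩ := p
  obtain ⟨⟨K, b⟩, hb⟩ := q
  obtain ⟨g, hK, hb'⟩ := h
  simp only at hK hb' ha hb
  subst hK; subst hb'
  have hcompat : ∀ x y : G, (QuotientGroup.leftRel H) x y ↔
      (QuotientGroup.leftRel (Subgroup.map (MulAut.conj g).toMonoidHom H))
        (Equiv.mulRight g⁻¹ x) (Equiv.mulRight g⁻¹ y) := by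
    intro x y
    have key : g⁻¹ * ((Equiv.mulRight g⁻¹ x)⁻¹ * (Equiv.mulRight g⁻¹ y)) * g
        = x⁻¹ * y := by
      simp only [Equiv.coe_mulRight]; group
    rw [QuotientGroup.leftRel_apply, QuotientGroup.leftRel_apply, mem_conj_iff, key]
  show (∑ x : G ⧸ H, rfun k H a ha x)
      = ∑ x : G ⧸ Subgroup.map (MulAut.conj g).toMonoidHom H,
          rfun k (Subgroup.map (MulAut.conj g).toMonoidHom H) (g * a * g⁻¹) hb x
  refine @Fintype.sum_equiv (G ⧸ H) (G ⧸ Subgroup.map (MulAut.conj g).toMonoidHom H)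
    (MonoidAlgebra k G) _ _ _
    (Quotient.congr (Equiv.mulRight g⁻¹) hcompat)
    (fun x => rfun k H a ha x)
    (fun x => rfun k (Subgroup.map (MulAut.conj g).toMonoidHom H) (g * a * g⁻¹) hb x) ?_
  intro x
  induction x using QuotientGroup.induction_on with
  | H x =>
    have hval : rfun k H a ha ((x : G ⧸ H))
        = rfun k (Subgroup.map (MulAut.conj g).toMonoidHom H) (g * a * g⁻¹) hb
            ((x * g⁻¹ : G) : G ⧸ Subgroup.map (MulAut.conj g).toMonoidHom H) := by
      rw [rfun_mk, rfun_mk]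
      congr 1
      group
    exact hval

/-- The linear map `ρ`. -/
noncomputable def rho : XB k G →ₗ[k] MonoidAlgebra k G :=
  Finsupp.linearCombination k (Quot.lift (rho0 k) (fun p q h => rho0_conj k p q h))

theorem rho_basis (H : Subgroup G) (a : G)
    (ha : a ∈ Subgroup.centralizer (H : Set G)) :
    rho k (basisElt k H a ha) = rho0 k ⟨(H, a), ha⟩ := by
  unfold rho basisElt
  rw [Finsupp.linearCombination_single, one_smul]

theorem rho0_eq (H : Subgroup G) (a : G)
    (ha : a ∈ Subgroup.centralizer (H : Set G)) :
    rho0 k (⟨(H, a), ha⟩ : CPair G) = ∑ q : G ⧸ H, rfun k H a ha q := rfl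

theorem rho_formula (H : Subgroup G) (a : G)
    (ha : a ∈ Subgroup.centralizer (H : Set G)) (R : Finset G)
    (hR : ∀ g : G, ∃! r, r ∈ R ∧ g⁻¹ * r ∈ H) :
    rho k (basisElt k H a ha) = ∑ x ∈ R, MonoidAlgebra.single (x * a * x⁻¹) (1 : k) := by
  rw [rho_basis, rho0_eq]
  symm
  refine Finset.sum_bij (fun r _ => ((r : G ⧸ H))) (fun _ _ => Finset.mem_univ _)
    ?_ ?_ ?_
  · intro r₁ h₁ r₂ h₂ hrr
    have hm : r₁⁻¹ * r₂ ∈ H := QuotientGroup.eq.mp hrr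
    obtain ⟨r, -, hu⟩ := hR r₁
    have e1 := hu r₁ ⟨h₁, by simpa using H.one_mem⟩
    have e2 := hu r₂ ⟨h₂, hm⟩
    rw [e1, e2]
  · intro q _
    obtain ⟨r, ⟨hrR, hr⟩, -⟩ := hR q.out
    refine ⟨r, hrR, ?_⟩
    rw [← QuotientGroup.out_eq' q]
    exact (QuotientGroup.eq.mpr hr).symm
  · intro r _
    rfl

theorem rho0_central (p : CPair G) :
    rho0 k p ∈ Subalgebra.center k (MonoidAlgebra k G) := by
  rw [Subalgebra.mem_center_iff]
  intro y
  induction y using MonoidAlgebra.induction_on with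
  | of g =>
    obtain ⟨⟨H, a⟩, ha⟩ := p
    show MonoidAlgebra.single g 1 * (∑ q : G ⧸ H, rfun k H a ha q)
        = (∑ q : G ⧸ H, rfun k H a ha q) * MonoidAlgebra.single g 1
    rw [Finset.mul_sum, Finset.sum_mul]
    refine Fintype.sum_bijective (fun q : G ⧸ H => g • q) (MulAction.bijective g) _ _ ?_
    intro q
    induction q using QuotientGroup.induction_on with
    | H x =>
      show MonoidAlgebra.single g 1 * rfun k H a ha ((x : G ⧸ H))
          = rfun k H a ha (((g * x : G) : G ⧸ H)) * MonoidAlgebra.single g 1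
      rw [rfun_mk, rfun_mk, MonoidAlgebra.single_mul_single,
        MonoidAlgebra.single_mul_single]
      congr 1
      all_goals first
        | group
        | simp
  | add f g hf hg => rw [add_mul, mul_add, hf, hg]
  | smul r f hf => rw [smul_mul_assoc, mul_smul_comm, hf]

theorem rho_central (w : XB k G) :
    rho k w ∈ Subalgebra.center k (MonoidAlgebra k G) := by
  induction w using Finsupp.induction_linear with
  | zero => rw [map_zero]; exact zero_mem _
  | add f g hf hg => rw [map_add]; exact add_mem hf hg
  | single q c =>
    induction q using Quot.ind with
    | mk p =>
      have hs : (Finsupp.single (Quot.mk _ p) c : XB k G)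
          = c • basisElt k p.1.1 p.1.2 p.2 := by
        simp [basisElt, Finsupp.smul_single]; rfl
      rw [hs, map_smul]
      refine Subalgebra.smul_mem _ ?_ c
      rw [rho_basis]
      exact rho0_central k p

theorem rho_one :
    rho k (basisElt k (⊤ : Subgroup G) 1 one_mem_centralizer_top) = 1 := by
  rw [rho_formula k ⊤ 1 one_mem_centralizer_top {1}
    (fun g => ⟨1, ⟨Finset.mem_singleton_self 1, Subgroup.mem_top _⟩,
      fun y hy => Finset.mem_singleton.mp hy.1⟩)]
  simp [MonoidAlgebra.one_def]

theorem doset_reps (K H : Subgroup G) :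
    ∃ R : Finset G, ∀ x : G, ∃! r, r ∈ R ∧ x ∈ DoubleCoset.doubleCoset r (K : Set G) (H : Set G) := by
  letI : Fintype (DoubleCoset.Quotient (K : Set G) (H : Set G)) := Quotient.fintype _
  have hmemdos : ∀ r y : G, y ∈ DoubleCoset.doubleCoset r (K : Set G) (H : Set G) ↔
      DoubleCoset.mk K H r = DoubleCoset.mk K H y := by
    intro r y
    rw [DoubleCoset.eq, DoubleCoset.mem_doubleCoset]
    simp only [SetLike.mem_coe]
  refine ⟨Finset.univ.image
    (fun q : DoubleCoset.Quotient (K : Set G) (H : Set G) => q.out), ?_⟩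
  intro x
  refine ⟨(DoubleCoset.mk K H x).out, ⟨Finset.mem_image_of_mem _ (Finset.mem_univ _), ?_⟩, ?_⟩
  · rw [hmemdos, DoubleCoset.out_eq']
  · rintro r ⟨hrR, hxr⟩
    obtain ⟨q, -, rfl⟩ := Finset.mem_image.mp hrR
    rw [hmemdos, DoubleCoset.out_eq'] at hxr
    rw [← hxr]

theorem conj_mem_K_inf (g : G) (K H : Subgroup G) (z : G) :
    z ∈ (K ⊓ Subgroup.map (MulAut.conj g).toMonoidHom H : Subgroup G)
      ↔ z ∈ K ∧ g⁻¹ * z * g ∈ H := by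
  rw [Subgroup.mem_inf, mem_conj_iff]

theorem rho_mul_single (K H : Subgroup G) (b a : G)
    (hb : b ∈ Subgroup.centralizer (K : Set G))
    (ha : a ∈ Subgroup.centralizer (H : Set G))
    (mul : XB k G →ₗ[k] XB k G →ₗ[k] XB k G) (hmul : IsXBMul mul) :
    rho k (mul (basisElt k K b hb) (basisElt k H a ha))
      = rho k (basisElt k K b hb) * rho k (basisElt k H a ha) := by
  obtain ⟨R, hR⟩ := doset_reps K H
  rw [hmul K H b a hb ha R hR, map_sum]
  simp only [rho_basis, rho0_eq]
  rw [Finset.sum_mul_sum, ← Finset.sum_product']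
  have huniq : ∀ r r' x : G, r ∈ R → r' ∈ R →
      x ∈ DoubleCoset.doubleCoset r (K : Set G) (H : Set G) →
      x ∈ DoubleCoset.doubleCoset r' (K : Set G) (H : Set G) → r = r' := by
    intro r r' x hr hr' hxr hxr'
    obtain ⟨s, -, hu⟩ := hR x
    rw [hu r ⟨hr, hxr⟩, hu r' ⟨hr', hxr'⟩]
  have key : ∑ s ∈ R.sigma (fun g : G => (Finset.univ :
        Finset (G ⧸ (K ⊓ Subgroup.map (MulAut.conj g).toMonoidHom H : Subgroup G)))),
      rfun k (K ⊓ Subgroup.map (MulAut.conj s.1).toMonoidHom H)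
        (b * (s.1 * a * s.1⁻¹)) (centralizer_aux hb ha) s.2
      = ∑ p ∈ Finset.univ ×ˢ Finset.univ,
          rfun k K b hb p.1 * rfun k H a ha p.2 := by
    refine Finset.sum_bij
      (fun s _ => ((s.2.out : G ⧸ K), ((s.2.out * s.1 : G) : G ⧸ H)))
      (fun _ _ => Finset.mem_product.mpr ⟨Finset.mem_univ _, Finset.mem_univ _⟩)
      ?_ ?_ ?_
    · -- injectivity
      rintro ⟨g, q⟩ hgq ⟨g', q'⟩ hgq' hpq
      have hgR : g ∈ R := (Finset.mem_sigma.mp hgq).1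
      have hgR' : g' ∈ R := (Finset.mem_sigma.mp hgq').1
      simp only [Prod.mk.injEq] at hpq
      obtain ⟨h1, h2⟩ := hpq
      have hc : q.out⁻¹ * q'.out ∈ K := QuotientGroup.eq.mp h1
      have hh : (q.out * g)⁻¹ * (q'.out * g') ∈ H := QuotientGroup.eq.mp h2
      have hgg' : g = g' := by
        refine huniq g g' g' hgR hgR' ?_ (DoubleCoset.mem_doubleCoset_self K H g')
        refine DoubleCoset.mem_doubleCoset.mpr ⟨(q.out⁻¹ * q'.out)⁻¹, K.inv_mem hc,
          (q.out * g)⁻¹ * (q'.out * g'), hh, ?_⟩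
        group
      subst hgg'
      have hq : q = q' := by
        have hmem : q.out⁻¹ * q'.out ∈
            (K ⊓ Subgroup.map (MulAut.conj g).toMonoidHom H : Subgroup G) := by
          rw [conj_mem_K_inf]
          refine ⟨hc, ?_⟩
          have h3 : g⁻¹ * (q.out⁻¹ * q'.out) * g = (q.out * g)⁻¹ * (q'.out * g) := by
            group
          rw [h3]; exact hh
        rw [← QuotientGroup.out_eq' q, ← QuotientGroup.out_eq' q']
        exact QuotientGroup.eq.mpr hmem
      rw [hq]
    · -- surjectivity
      rintro ⟨y, z⟩ -
      obtain ⟨g, ⟨hgR, hgd⟩, -⟩ := hR (y.out⁻¹ * z.out)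
      obtain ⟨c, hcK, h, hhH, hch⟩ := DoubleCoset.mem_doubleCoset.mp hgd
      set L := (K ⊓ Subgroup.map (MulAut.conj g).toMonoidHom H : Subgroup G) with hL
      refine ⟨⟨g, ((y.out * c : G) : G ⧸ L)⟩,
        Finset.mem_sigma.mpr ⟨hgR, Finset.mem_univ _⟩, ?_⟩
      obtain ⟨w, hw⟩ : ∃ w, w = (((y.out * c : G) : G ⧸ L)).out := ⟨_, rfl⟩
      have hd : (y.out * c)⁻¹ * w ∈ L := by
        rw [hw]
        exact QuotientGroup.eq.mp (QuotientGroup.out_eq' _).symm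
      obtain ⟨hdK, hdH⟩ := (conj_mem_K_inf g K H _).mp hd
      have hyw : (((((y.out * c : G) : G ⧸ L)).out : G ⧸ K)) = y := by
        rw [← hw, ← QuotientGroup.out_eq' y]
        refine (QuotientGroup.eq.mpr ?_).symm
        have h4 : y.out⁻¹ * w = c * ((y.out * c)⁻¹ * w) := by group
        rw [h4]
        exact K.mul_mem hcK hdK
      have hzw : ((((((y.out * c : G) : G ⧸ L)).out * g : G) : G ⧸ H)) = z := by
        rw [← hw, ← QuotientGroup.out_eq' z]
        refine (QuotientGroup.eq.mpr ?_).symm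
        have hzval : z.out = y.out * (c * g * h) := by
          rw [← hch]; group
        have h5 : z.out⁻¹ * (w * g) = h⁻¹ * (g⁻¹ * ((y.out * c)⁻¹ * w) * g) := by
          rw [hzval]; group
        rw [h5]
        exact H.mul_mem (H.inv_mem hhH) hdH
      exact Prod.ext hyw hzw
    · -- values agree
      rintro ⟨g, q⟩ -
      dsimp only
      conv_lhs => rw [← QuotientGroup.out_eq' q]
      simp only [rfun_mk]
      rw [MonoidAlgebra.single_mul_single]
      congr 1
      all_goals first
        | group
        | simp
  rw [Finset.sum_sigma] at key
  exact key

theorem rho_mul (mul : XB k G →ₗ[k] XB k G →ₗ[k] XB k G) (hmul : IsXBMul mul)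
    (x y : XB k G) : rho k (mul x y) = rho k x * rho k y := by
  induction x using Finsupp.induction_linear with
  | zero => simp
  | add f g hf hg => simp only [map_add, LinearMap.add_apply, add_mul, hf, hg]
  | single p c =>
    induction y using Finsupp.induction_linear with
    | zero => simp
    | add f g hf hg => simp only [map_add, mul_add, hf, hg]
    | single p' c' =>
      induction p using Quot.ind with
      | mk u =>
        induction p' using Quot.ind with
        | mk v =>
          have hs : ∀ (w : CPair G) (d : k), (Finsupp.single (Quot.mk _ w) d : XB k G)
              = d • basisElt k w.1.1 w.1.2 w.2 := by
            intro w d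
            simp [basisElt, Finsupp.smul_single]; rfl
          simp only [hs, map_smul, LinearMap.smul_apply, smul_mul_assoc, mul_smul_comm]
          rw [rho_mul_single k u.1.1 v.1.1 u.1.2 v.1.2 u.2 v.2 mul hmul]

/-- membership of `a` in the centralizer of its centralizer -/
theorem mem_centralizer_centralizer (a : G) :
    a ∈ Subgroup.centralizer ((Subgroup.centralizer {a} : Subgroup G) : Set G) := by
  intro m hm
  exact (hm a (Set.mem_singleton a)).symm

/-- The class sum of `a`. -/
noncomputable def classSum (a : G) : MonoidAlgebra k G :=
  ∑ x ∈ Finset.univ.filter (fun x => IsConj a x), MonoidAlgebra.single x (1 : k)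

theorem rho_classSum (a : G) :
    rho k (basisElt k (Subgroup.centralizer {a}) a (mem_centralizer_centralizer a))
      = classSum k a := by
  rw [rho_basis, rho0_eq, classSum]
  set C := (Subgroup.centralizer {a} : Subgroup G) with hC
  have hCmem : ∀ z : G, z ∈ C ↔ a * z = z * a := by
    intro z
    constructor
    · intro hz; exact hz a (Set.mem_singleton a)
    · intro hz m hm
      rw [Set.mem_singleton_iff] at hm; subst hm; exact hz
  refine Finset.sum_bij (fun q _ => q.out * a * q.out⁻¹) ?_ ?_ ?_ ?_
  · intro q _
    exact Finset.mem_filter.mpr ⟨Finset.mem_univ _, isConj_iff.mpr ⟨q.out, rfl⟩⟩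
  · intro q _ q' _ hqq
    rw [← QuotientGroup.out_eq' q, ← QuotientGroup.out_eq' q']
    refine QuotientGroup.eq.mpr ((hCmem _).mpr ?_)
    have h6 : a * (q.out⁻¹ * q'.out) = q.out⁻¹ * (q.out * a * q.out⁻¹) * q'.out := by
      group
    rw [h6, hqq]; group
  · intro g hg
    obtain ⟨x, hx⟩ := isConj_iff.mp (Finset.mem_filter.mp hg).2
    refine ⟨((x : G ⧸ C)), Finset.mem_univ _, ?_⟩
    show ((x : G ⧸ C)).out * a * ((x : G ⧸ C)).out⁻¹ = g
    obtain ⟨w, hw⟩ : ∃ w, w = ((x : G ⧸ C)).out := ⟨_, rfl⟩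
    rw [← hw]
    have hd : x⁻¹ * w ∈ C := by
      rw [hw]
      exact QuotientGroup.eq.mp (QuotientGroup.out_eq' _).symm
    have hcom : a * (x⁻¹ * w) = (x⁻¹ * w) * a := (hCmem _).mp hd
    calc w * a * w⁻¹ = x * ((x⁻¹ * w) * a) * w⁻¹ := by group
      _ = x * (a * (x⁻¹ * w)) * w⁻¹ := by rw [hcom]
      _ = x * a * x⁻¹ := by group
      _ = g := hx
  · intro q _
    conv_lhs => rw [← QuotientGroup.out_eq' q]
    rw [rfun_mk]

theorem central_apply_conj (z : MonoidAlgebra k G)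
    (hz : z ∈ Subalgebra.center k (MonoidAlgebra k G)) (x g : G) :
    z.coeff (x * g * x⁻¹) = z.coeff g := by
  have h := (Subalgebra.mem_center_iff.mp hz) (MonoidAlgebra.single x 1)
  have h1 : (MonoidAlgebra.single x (1:k) * z).coeff (x * g) = z.coeff g := by
    rw [MonoidAlgebra.coeff_single_mul_apply]
    simp [mul_assoc]
  have h2 : (z * MonoidAlgebra.single x (1:k)).coeff (x * g) = z.coeff (x * g * x⁻¹) := by
    rw [MonoidAlgebra.coeff_mul_single_apply]
    simp [mul_assoc]
  rw [← h1, h, h2]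

theorem rho_surj (z : MonoidAlgebra k G)
    (hz : z ∈ Subalgebra.center k (MonoidAlgebra k G)) :
    ∃ w : XB k G, rho k w = z := by
  refine ⟨∑ c : ConjClasses G, z.coeff c.out •
    basisElt k (Subgroup.centralizer {c.out}) c.out (mem_centralizer_centralizer c.out), ?_⟩
  rw [map_sum]
  simp only [map_smul, rho_classSum]
  ext g
  rw [MonoidAlgebra.coeff_sum, Finsupp.finset_sum_apply]
  have hterm : ∀ c : ConjClasses G,
      ((z.coeff c.out • classSum k c.out : MonoidAlgebra k G)).coeff g
        = if c = ConjClasses.mk g then z.coeff c.out else 0 := by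
    intro c
    rw [MonoidAlgebra.coeff_smul, Finsupp.smul_apply, classSum, MonoidAlgebra.coeff_sum,
      Finsupp.finset_sum_apply]
    simp only [MonoidAlgebra.coeff_single_apply]
    rw [Finset.sum_ite_eq' (Finset.univ.filter (fun x => IsConj c.out x)) g
      (fun _ => (1 : k))]
    by_cases hc : c = ConjClasses.mk g
    · have hconj : IsConj c.out g := by
        rw [← ConjClasses.mk_eq_mk_iff_isConj]
        exact (Quotient.out_eq c).trans hc
      rw [if_pos (Finset.mem_filter.mpr ⟨Finset.mem_univ _, hconj⟩), if_pos hc]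
      simp
    · have hconj : ¬ IsConj c.out g := by
        intro hcon
        exact hc ((Quotient.out_eq c).symm.trans
          (ConjClasses.mk_eq_mk_iff_isConj.mpr hcon))
      rw [if_neg (fun hmem => hconj (Finset.mem_filter.mp hmem).2), if_neg hc]
      simp
  rw [Finset.sum_congr rfl (fun c _ => hterm c), Finset.sum_ite_eq'
    Finset.univ (ConjClasses.mk g) (fun c => z.coeff c.out)]
  simp only [Finset.mem_univ, if_true]
  have hisconj : IsConj (ConjClasses.mk g).out g :=
    ConjClasses.mk_eq_mk_iff_isConj.mp (Quotient.out_eq (ConjClasses.mk g))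
  obtain ⟨x, hx⟩ := isConj_iff.mp hisconj
  conv_rhs => rw [← hx]
  exact (central_apply_conj k z hz x _).symm

end Rho

/-- The map `ρ : xB_k(G) → Z(kG)` sending a basis element `(H, a)` to
`Σ_{[x] ∈ G/H} x a x⁻¹` (sum over left coset representatives) is a well-defined
surjective homomorphism of `k`-algebras from the crossed Burnside algebra onto the
center of the group algebra `kG`. -/
theorem statement8 (k G : Type) [CommRing k] [Group G] [Fintype G]
    (mul : XB k G →ₗ[k] XB k G →ₗ[k] XB k G) (hmul : IsXBMul mul) :
    ∃ ρ : XB k G →ₗ[k] MonoidAlgebra k G,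
      -- the defining formula, for every choice of pair representative and of
      -- left coset representatives:
      (∀ (H : Subgroup G) (a : G) (ha : a ∈ Subgroup.centralizer (H : Set G))
        (R : Finset G), (∀ g : G, ∃! r, r ∈ R ∧ g⁻¹ * r ∈ H) →
        ρ (basisElt k H a ha) =
          ∑ x ∈ R, MonoidAlgebra.single (x * a * x⁻¹) (1 : k)) ∧
      -- `ρ` lands in the center:
      (∀ w : XB k G, ρ w ∈ Subalgebra.center k (MonoidAlgebra k G)) ∧
      -- `ρ` is unital and multiplicative:
      (ρ (basisElt k ⊤ 1 one_mem_centralizer_top) = 1) ∧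
      (∀ x y : XB k G, ρ (mul x y) = ρ x * ρ y) ∧
      -- `ρ` is surjective onto the center:
      (∀ z ∈ Subalgebra.center k (MonoidAlgebra k G), ∃ w : XB k G, ρ w = z) := by
  refine ⟨rho k, ?_, ?_, ?_, ?_, ?_⟩
  · exact fun H a ha R hR => rho_formula k H a ha R hR
  · exact fun w => rho_central k w
  · exact rho_one k
  · exact fun x y => rho_mul k mul hmul x y
  · exact fun z hz => rho_surj k z hz


end CrossedBurnside
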